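/- arXiv:0706.0362 — 2 statements merged into one kernel-verified Lean document; each statement's English description precedes it below -/
import Mathlib

section
/- Let G be a compact Hausdorff topological group with normalised Haar measure, let B be a complex Banach space, and let α be a strongly continuous action of G on B by isometric linear automorphisms. Suppose (B_n)_{n≥1} is an increasing sequence of closed linear subspaces of B, each invariant under every α_s, whose union ⋃_n B_n is dense in B. Then the fixed-point space B^α := {b ∈ B : α_s(b) = b for all s ∈ G} equals the closure of ⋃_n (B_n)^α, where (B_n)^α := B_n ∩ B^α. -/
open MeasureTheory


/-- Let `G` be a compact Hausdorff group, `B` a complex Banach space and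
`α` a strongly continuous action of `G` on `B` by isometric linear automorphisms.  If
`(Bₙ)` is an increasing sequence of closed, `α`-invariant linear subspaces of `B` whose
union is dense in `B`, then the fixed-point space `B^α` is the closure of `⋃ₙ (Bₙ)^α`,
where `(Bₙ)^α = Bₙ ∩ B^α`. -/
theorem stmt2 (G : Type) [Group G] [TopologicalSpace G] [IsTopologicalGroup G]
    [CompactSpace G] [T2Space G]
    (B : Type) [NormedAddCommGroup B] [NormedSpace ℂ B] [CompleteSpace B]
    (α : G → B ≃ₗᵢ[ℂ] B)
    (hmul : ∀ (s t : G) (b : B), α (s * t) b = α s (α t b))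
    (hone : ∀ b : B, α 1 b = b)
    (hcont : ∀ b : B, Continuous fun s => α s b)
    (Bn : ℕ → Submodule ℂ B)
    (hclosed : ∀ n, IsClosed (Bn n : Set B))
    (hmono : ∀ n, Bn n ≤ Bn (n + 1))
    (hinv : ∀ (n : ℕ) (s : G) (b : B), b ∈ Bn n → α s b ∈ Bn n)
    (hdense : Dense (⋃ n, (Bn n : Set B))) :
    {b : B | ∀ s : G, α s b = b} =
      closure (⋃ n, ((Bn n : Set B) ∩ {b : B | ∀ s : G, α s b = b})) := by
  classical
  borelize G
  haveI : Nonempty G := ⟨1⟩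
  haveI : LocallyCompactSpace G := inferInstance
  set μ : Measure G := Measure.haar
  haveI : IsFiniteMeasure μ := inferInstance
  have h0 : μ Set.univ ≠ 0 := by
    exact (isOpen_univ.measure_pos μ ⟨1, trivial⟩).ne'
  have htop : μ Set.univ ≠ ⊤ := measure_ne_top μ _
  set ν : Measure G := (μ Set.univ)⁻¹ • μ with hν
  haveI : IsProbabilityMeasure ν :=
    ⟨by rw [hν, Measure.smul_apply, smul_eq_mul, ENNReal.inv_mul_cancel h0 htop]⟩
  haveI : ν.IsMulLeftInvariant := by
    rw [hν]; infer_instance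
  borelize B
  have hint : ∀ b : B, Integrable (fun s => α s b) ν := by
    intro b
    have hsm : StronglyMeasurable (fun s => α s b) := by
      rw [stronglyMeasurable_iff_measurable_separable]
      exact ⟨(hcont b).measurable, ((isCompact_range (hcont b)).isSeparable)⟩
    refine ⟨hsm.aestronglyMeasurable, ?_⟩
    apply HasFiniteIntegral.mono' (g := fun _ => ‖b‖) (hasFiniteIntegral_const _)
    filter_upwards with s
    simp
  -- key 1 : the average is a fixed point
  have key1 : ∀ (t : G) (b : B), α t (∫ s, α s b ∂ν) = ∫ s, α s b ∂ν := by
    intro t b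
    have h1 : α t (∫ s, α s b ∂ν) = ∫ s, α t (α s b) ∂ν :=
      ((α t).toLinearIsometry.toContinuousLinearMap.integral_comp_comm (hint b)).symm
    rw [h1]
    have h2 : (fun s => α t (α s b)) = fun s => α (t * s) b := by
      funext s; rw [hmul]
    rw [h2]
    exact integral_mul_left_eq_self (fun s => α s b) t
  -- key 2 : fixed points are averaged to themselves
  have key2 : ∀ b : B, (∀ s : G, α s b = b) → (∫ s, α s b ∂ν) = b := by
    intro b hb
    have : (fun s => α s b) = fun _ : G => b := funext hb
    rw [this, integral_const, probReal_univ, one_smul]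
  -- key 3 : the average stays in each Bn
  have key3 : ∀ (n : ℕ) (x : B), x ∈ Bn n → (∫ s, α s x ∂ν) ∈ Bn n := by
    intro n x hx
    have hconv : Convex ℝ (Bn n : Set B) := by
      simpa using ((Bn n).restrictScalars ℝ).convex
    exact hconv.integral_mem (hclosed n) (Filter.Eventually.of_forall fun s => hinv n s x hx) (hint x)
  -- key 4 : the average is norm-nonincreasing
  have key4 : ∀ y : B, ‖∫ s, α s y ∂ν‖ ≤ ‖y‖ := by
    intro y
    calc ‖∫ s, α s y ∂ν‖ ≤ ∫ s, ‖α s y‖ ∂ν := norm_integral_le_integral_norm _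
      _ = ‖y‖ := by
        simp only [LinearIsometryEquiv.norm_map]
        rw [integral_const, probReal_univ, one_smul]
  apply Set.Subset.antisymm
  · intro b hb
    rw [Metric.mem_closure_iff]
    intro ε hε
    obtain ⟨x, hx, hdist⟩ : ∃ x ∈ ⋃ n, (Bn n : Set B), dist b x < ε := by
      have := Metric.dense_iff.mp hdense b ε hε
      obtain ⟨x, hx1, hx2⟩ := this
      exact ⟨x, hx2, by simpa [dist_comm] using Metric.mem_ball.mp hx1⟩
    obtain ⟨n, hxn⟩ := Set.mem_iUnion.mp hx
    refine ⟨∫ s, α s x ∂ν, Set.mem_iUnion.mpr ⟨n, key3 n x hxn, fun t => key1 t x⟩, ?_⟩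
    have hPb : (∫ s, α s b ∂ν) = b := key2 b hb
    have hsub : b - (∫ s, α s x ∂ν) = ∫ s, α s (b - x) ∂ν := by
      conv_lhs => rw [← hPb]
      rw [← integral_sub (hint b) (hint x)]
      simp
    calc dist b (∫ s, α s x ∂ν) = ‖b - (∫ s, α s x ∂ν)‖ := dist_eq_norm _ _
      _ = ‖∫ s, α s (b - x) ∂ν‖ := by rw [hsub]
      _ ≤ ‖b - x‖ := key4 _
      _ = dist b x := (dist_eq_norm _ _).symm
      _ < ε := hdist
  · apply closure_minimal
    · exact Set.iUnion_subset fun n => Set.inter_subset_right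
    · have : {b : B | ∀ s : G, α s b = b} = ⋂ s : G, {b : B | α s b = b} := by
        ext b; simp [Set.mem_iInter]
      rw [this]
      exact isClosed_iInter fun s => isClosed_eq (α s).continuous continuous_id
end

section
/- Let Λ be a k-graph with no sources. Then for every vertex v ∈ Λ^0 the set vΛ^∞ of infinite paths with range v is nonempty. -/
open CategoryTheory

attribute [local instance 2000] Preorder.smallCategory

/-- A `k`-graph: a small category `Λ` equipped with a degree functor `d : Λ → ℕᵏ`
satisfying the unique factorisation property.  Morphisms point from the range of a path
to its source, so that `f ≫ g` corresponds to the composition `fg` of paths in the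
`k`-graph literature (with `r (f ≫ g) = r f` and `s (f ≫ g) = s g`). -/
structure KGraph (k : ℕ) (Λ : Type) [SmallCategory Λ] : Type where
  deg : ∀ {a b : Λ}, (a ⟶ b) → Fin k → ℕ
  deg_id : ∀ a : Λ, deg (𝟙 a) = 0
  deg_comp : ∀ {a b c : Λ} (f : a ⟶ b) (g : b ⟶ c), deg (f ≫ g) = deg f + deg g
  factor : ∀ {a b : Λ} (f : a ⟶ b) (m n : Fin k → ℕ), deg f = m + n →
    ∃! t : Σ c : Λ, (a ⟶ c) × (c ⟶ b),
      deg t.2.1 = m ∧ deg t.2.2 = n ∧ t.2.1 ≫ t.2.2 = f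

/-- An infinite path in a `k`-graph: a degree-preserving functor `Ω_k → Λ`, where `Ω_k`
is realised as the preorder category on `ℕᵏ = Fin k → ℕ`; the morphism `(p, q)` (for
`p ≤ q`) is `homOfLE h : p ⟶ q` and must be sent to a path of degree `q - p`.
The range of the path is `P.obj 0`. -/
structure InfPath {k : ℕ} {Λ : Type} [SmallCategory Λ] (KG : KGraph k Λ) : Type where
  P : (Fin k → ℕ) ⥤ Λ
  deg_eq : ∀ {p q : Fin k → ℕ} (h : p ≤ q), KG.deg (P.map (homOfLE h)) = q - p

/-- Translation by `n` on `ℕᵏ`, as a functor. -/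
def transFunctor (k : ℕ) (n : Fin k → ℕ) : (Fin k → ℕ) ⥤ (Fin k → ℕ) where
  obj p := p + n
  map f := homOfLE (add_le_add (leOfHom f) (le_refl n))
  map_id _ := rfl
  map_comp _ _ := rfl

/-- The shift `σⁿ x` of an infinite path `x`, satisfying `σⁿ x (p, q) = x (p + n, q + n)`. -/
def InfPath.shift {k : ℕ} {Λ : Type} [SmallCategory Λ] {KG : KGraph k Λ}
    (x : InfPath KG) (n : Fin k → ℕ) : InfPath KG where
  P := transFunctor k n ⋙ x.P
  deg_eq {p q} h := by
    have h1 : (transFunctor k n ⋙ x.P).map (homOfLE h)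
        = x.P.map (homOfLE (add_le_add h (le_refl n))) := rfl
    rw [h1]
    show KG.deg (x.P.map (homOfLE (add_le_add h (le_refl n)))) = q - p
    rw [x.deg_eq]
    funext i
    simp only [Pi.sub_apply, Pi.add_apply]
    omega

/-- `vΛⁿ ≠ ∅` for every vertex `v` and every `n ∈ ℕᵏ`. -/
def NoSources {k : ℕ} {Λ : Type} [SmallCategory Λ] (KG : KGraph k Λ) : Prop :=
  ∀ (v : Λ) (n : Fin k → ℕ), ∃ (b : Λ) (f : v ⟶ b), KG.deg f = n

namespace Stmt5Aux

variable {k : ℕ} {Λ : Type} [SmallCategory Λ]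

lemma addsub {p q : Fin k → ℕ} (h : p ≤ q) : q = p + (q - p) := by
  funext i; have := Pi.le_def.mp h i
  simp only [Pi.add_apply, Pi.sub_apply]; omega

noncomputable def pre (KG : KGraph k Λ) {a b : Λ} (f : a ⟶ b) (p : Fin k → ℕ)
    (h : p ≤ KG.deg f) : Σ c : Λ, (a ⟶ c) × (c ⟶ b) :=
  Classical.choose (KG.factor f p (KG.deg f - p) (addsub h))

lemma pre_spec (KG : KGraph k Λ) {a b : Λ} (f : a ⟶ b) (p : Fin k → ℕ) (h : p ≤ KG.deg f) :
    KG.deg (pre KG f p h).2.1 = p ∧ KG.deg (pre KG f p h).2.2 = KG.deg f - p ∧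
      (pre KG f p h).2.1 ≫ (pre KG f p h).2.2 = f :=
  (Classical.choose_spec (KG.factor f p (KG.deg f - p) (addsub h))).1

lemma pre_unique (KG : KGraph k Λ) {a b : Λ} {f : a ⟶ b} {p : Fin k → ℕ} (h : p ≤ KG.deg f)
    (t : Σ c : Λ, (a ⟶ c) × (c ⟶ b)) (h1 : KG.deg t.2.1 = p) (h2 : t.2.1 ≫ t.2.2 = f) :
    t = pre KG f p h := by
  have hd : KG.deg t.2.2 = KG.deg f - p := by
    have hc := KG.deg_comp t.2.1 t.2.2
    rw [h2, h1] at hc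
    funext i; have := congrFun hc i
    simp only [Pi.add_apply, Pi.sub_apply] at this ⊢; omega
  exact (Classical.choose_spec (KG.factor f p (KG.deg f - p) (addsub h))).2 t ⟨h1, hd, h2⟩

def cn (k n : ℕ) : Fin k → ℕ := fun _ => n

variable (KG : KGraph k Λ) (hns : NoSources KG) (v : Λ)

noncomputable def F : ℕ → Σ b : Λ, v ⟶ b
  | 0 => ⟨v, 𝟙 v⟩
  | n + 1 =>
    ⟨Classical.choose (hns (F n).1 (cn k 1)),
      (F n).2 ≫ Classical.choose (Classical.choose_spec (hns (F n).1 (cn k 1)))⟩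

lemma deg_F : ∀ n : ℕ, KG.deg (F KG hns v n).2 = cn k n
  | 0 => by
    show KG.deg (𝟙 v) = cn k 0
    rw [KG.deg_id]; funext i; simp [cn]
  | n + 1 => by
    show KG.deg ((F KG hns v n).2 ≫ Classical.choose (Classical.choose_spec (hns (F KG hns v n).1 (cn k 1)))) = cn k (n + 1)
    rw [KG.deg_comp, deg_F n,
      Classical.choose_spec (Classical.choose_spec (hns (F KG hns v n).1 (cn k 1)))]
    funext i; simp [cn, Pi.add_apply]

noncomputable def Pr (p : Fin k → ℕ) (n : ℕ) (h : p ≤ cn k n) : Σ b : Λ, v ⟶ b :=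
  ⟨(pre KG (F KG hns v n).2 p (by rw [deg_F]; exact h)).1,
   (pre KG (F KG hns v n).2 p (by rw [deg_F]; exact h)).2.1⟩

lemma Pr_succ (p : Fin k → ℕ) (n : ℕ) (h : p ≤ cn k n) (h' : p ≤ cn k (n + 1)) :
    Pr KG hns v p n h = Pr KG hns v p (n + 1) h' := by
  have hp : p ≤ KG.deg (F KG hns v n).2 := by rw [deg_F]; exact h
  have hp' : p ≤ KG.deg (F KG hns v (n + 1)).2 := by rw [deg_F]; exact h'
  set g := Classical.choose (Classical.choose_spec (hns (F KG hns v n).1 (cn k 1))) with hg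
  set A := pre KG (F KG hns v n).2 p hp with hA
  have sA := pre_spec KG (F KG hns v n).2 p hp
  have hT : (⟨A.1, A.2.1, A.2.2 ≫ g⟩ : Σ c : Λ, (v ⟶ c) × (c ⟶ (F KG hns v (n + 1)).1))
      = pre KG (F KG hns v (n + 1)).2 p hp' := by
    apply pre_unique
    · exact sA.1
    · show A.2.1 ≫ A.2.2 ≫ g = (F KG hns v (n + 1)).2
      rw [← Category.assoc, sA.2.2]
      rfl
  exact congrArg
    (fun t : Σ c : Λ, (v ⟶ c) × (c ⟶ (F KG hns v (n + 1)).1) => (⟨t.1, t.2.1⟩ : Σ b : Λ, v ⟶ b))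
    hT

lemma Pr_le (p : Fin k → ℕ) : ∀ {n m : ℕ}, n ≤ m → ∀ (h : p ≤ cn k n) (h' : p ≤ cn k m),
    Pr KG hns v p n h = Pr KG hns v p m h' := by
  intro n m hnm
  induction m with
  | zero =>
    intro h h'
    have : n = 0 := Nat.le_zero.mp hnm
    subst this; rfl
  | succ m ih =>
    intro h h'
    rcases Nat.lt_or_ge n (m + 1) with hl | hg
    · have hn : n ≤ m := Nat.lt_succ_iff.mp hl
      have hm : p ≤ cn k m := Pi.le_def.mpr fun i => le_trans (Pi.le_def.mp h i) hn
      exact (ih hn h hm).trans (Pr_succ KG hns v p m hm h')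
    · have : n = m + 1 := le_antisymm hnm hg
      subst this; rfl

lemma Pr_eq (p : Fin k → ℕ) {n m : ℕ} (h : p ≤ cn k n) (h' : p ≤ cn k m) :
    Pr KG hns v p n h = Pr KG hns v p m h' := by
  rcases le_total n m with hnm | hmn
  · exact Pr_le KG hns v p hnm h h'
  · exact (Pr_le KG hns v p hmn h' h).symm

lemma le_cn_sum (p : Fin k → ℕ) : p ≤ cn k (∑ i, p i) :=
  Pi.le_def.mpr fun i => Finset.single_le_sum (fun j _ => Nat.zero_le (p j)) (Finset.mem_univ i)

noncomputable def Xp (p : Fin k → ℕ) : Σ b : Λ, v ⟶ b :=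
  Pr KG hns v p (∑ i, p i) (le_cn_sum p)

lemma Xp_eq (p : Fin k → ℕ) {n : ℕ} (h : p ≤ cn k n) : Xp KG hns v p = Pr KG hns v p n h :=
  Pr_eq KG hns v p _ h

lemma mk_snd_inj {α : Type} {β : α → Type} {a : α} {x y : β a}
    (h : (⟨a, x⟩ : Σ a, β a) = ⟨a, y⟩) : x = y := by
  injection h with h1 h2

lemma exu_transport {d : Fin k → ℕ} {c : Λ} {g : v ⟶ c} {B B' : Σ b : Λ, v ⟶ b}
    (hB : B = B')
    (H : ∃! m : c ⟶ B.1, KG.deg m = d ∧ g ≫ m = B.2) :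
    ∃! m : c ⟶ B'.1, KG.deg m = d ∧ g ≫ m = B'.2 := by
  subst hB; exact H

lemma key' {a : Λ} (f : v ⟶ a) (p q : Fin k → ℕ) (hpq : p ≤ q)
    (hpf : p ≤ KG.deg f) (hqf : q ≤ KG.deg f) :
    ∃! m : (pre KG f p hpf).1 ⟶ (pre KG f q hqf).1,
      KG.deg m = q - p ∧ (pre KG f p hpf).2.1 ≫ m = (pre KG f q hqf).2.1 := by
  set A := pre KG f p hpf with hA
  have sA := pre_spec KG f p hpf
  rw [← hA] at sA
  have h2 : q - p ≤ KG.deg A.2.2 := by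
    refine Pi.le_def.mpr fun i => ?_
    have e := congrFun sA.2.1 i
    have h1 := Pi.le_def.mp hpq i
    have h3 := Pi.le_def.mp hqf i
    simp only [Pi.sub_apply] at e ⊢
    omega
  set T := pre KG A.2.2 (q - p) h2 with hT
  have sT := pre_spec KG A.2.2 (q - p) h2
  rw [← hT] at sT
  have he : (⟨T.1, A.2.1 ≫ T.2.1, T.2.2⟩ : Σ c : Λ, (v ⟶ c) × (c ⟶ a)) = pre KG f q hqf := by
    apply pre_unique
    · show KG.deg (A.2.1 ≫ T.2.1) = q
      rw [KG.deg_comp, sA.1, sT.1]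
      funext i
      have := Pi.le_def.mp hpq i
      simp only [Pi.add_apply, Pi.sub_apply]
      omega
    · show (A.2.1 ≫ T.2.1) ≫ T.2.2 = f
      rw [Category.assoc, sT.2.2, sA.2.2]
  refine exu_transport KG v
    (congrArg (fun t : Σ c : Λ, (v ⟶ c) × (c ⟶ a) => (⟨t.1, t.2.1⟩ : Σ c : Λ, v ⟶ c)) he) ?_
  refine ⟨T.2.1, ⟨sT.1, rfl⟩, ?_⟩
  rintro m ⟨hm1, hm2⟩
  have hm2' : A.2.1 ≫ m = A.2.1 ≫ T.2.1 := hm2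
  have h3 : m ≫ T.2.2 = A.2.2 := by
    have e : (⟨A.1, A.2.1, m ≫ T.2.2⟩ : Σ c : Λ, (v ⟶ c) × (c ⟶ a)) = A := by
      refine pre_unique KG hpf _ sA.1 ?_
      show A.2.1 ≫ m ≫ T.2.2 = f
      rw [← Category.assoc, hm2', Category.assoc, sT.2.2, sA.2.2]
    have e2 := mk_snd_inj (e.trans (rfl : A = ⟨A.1, A.2.1, A.2.2⟩))
    exact congrArg Prod.snd e2
  have e' : (⟨T.1, m, T.2.2⟩ : Σ c : Λ, (A.1 ⟶ c) × (c ⟶ a)) = T :=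
    pre_unique KG h2 _ hm1 h3
  have e2 := mk_snd_inj (e'.trans (rfl : T = ⟨T.1, T.2.1, T.2.2⟩))
  exact congrArg Prod.fst e2

lemma Xexu (p q : Fin k → ℕ) (hpq : p ≤ q) :
    ∃! m : (Xp KG hns v p).1 ⟶ (Xp KG hns v q).1,
      KG.deg m = q - p ∧ (Xp KG hns v p).2 ≫ m = (Xp KG hns v q).2 := by
  set n := (∑ i, p i) + (∑ i, q i) with hn
  have hpn : p ≤ cn k n :=
    Pi.le_def.mpr fun i =>
      le_trans (Pi.le_def.mp (le_cn_sum p) i) (Nat.le_add_right _ _)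
  have hqn : q ≤ cn k n :=
    Pi.le_def.mpr fun i =>
      le_trans (Pi.le_def.mp (le_cn_sum q) i) (Nat.le_add_left _ _)
  have e1 : Xp KG hns v p = Pr KG hns v p n hpn := Xp_eq KG hns v p hpn
  have e2 : Xp KG hns v q = Pr KG hns v q n hqn := Xp_eq KG hns v q hqn
  rw [e1, e2]
  have hpf : p ≤ KG.deg (F KG hns v n).2 := by rw [deg_F]; exact hpn
  have hqf : q ≤ KG.deg (F KG hns v n).2 := by rw [deg_F]; exact hqn
  exact key' KG v (F KG hns v n).2 p q hpq hpf hqf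

end Stmt5Aux

/-- If a `k`-graph `Λ` has no sources then `vΛ^∞ ≠ ∅` for every vertex
`v`: there is an infinite path with range `v`. -/
theorem stmt5 {k : ℕ} {Λ : Type} [SmallCategory Λ] (KG : KGraph k Λ)
    (hns : NoSources KG) (v : Λ) :
    ∃ x : InfPath KG, x.P.obj 0 = v := by
  classical
  choose xm hxm using fun (p q : Fin k → ℕ) (h : p ≤ q) => Stmt5Aux.Xexu KG hns v p q h
  refine ⟨⟨{ obj := fun p => (Stmt5Aux.Xp KG hns v p).1,
             map := fun {p q} f => xm p q (leOfHom f),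
             map_id := ?_, map_comp := ?_ }, ?_⟩, ?_⟩
  · intro p
    refine ((hxm p p (le_refl p)).2 (𝟙 _) ⟨?_, Category.comp_id _⟩).symm
    rw [KG.deg_id]
    funext i
    simp only [Pi.sub_apply, Pi.zero_apply]
    omega
  · intro p q r f g
    have hpq := leOfHom f
    have hqr := leOfHom g
    refine ((hxm p r (hpq.trans hqr)).2 (xm p q hpq ≫ xm q r hqr) ⟨?_, ?_⟩).symm
    · rw [KG.deg_comp, (hxm p q hpq).1.1, (hxm q r hqr).1.1]
      funext i
      have h1 := Pi.le_def.mp hpq i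
      have h2 := Pi.le_def.mp hqr i
      simp only [Pi.add_apply, Pi.sub_apply]
      omega
    · rw [← Category.assoc, (hxm p q hpq).1.2, (hxm q r hqr).1.2]
  · intro p q h
    exact (hxm p q h).1.1
  · show (Stmt5Aux.Xp KG hns v 0).1 = v
    have h0 : (0 : Fin k → ℕ) ≤ Stmt5Aux.cn k 0 :=
      Pi.le_def.mpr fun i => Nat.le_refl 0
    have e := Stmt5Aux.Xp_eq KG hns v 0 h0
    rw [e]
    have hpf : (0 : Fin k → ℕ) ≤ KG.deg (𝟙 v) := by
      rw [KG.deg_id]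
    have ht : (⟨v, 𝟙 v, 𝟙 v⟩ : Σ c : Λ, (v ⟶ c) × (c ⟶ v)) = Stmt5Aux.pre KG (𝟙 v) 0 hpf :=
      Stmt5Aux.pre_unique KG hpf _ (KG.deg_id v) (Category.id_comp _)
    exact (congrArg Sigma.fst ht).symm
end
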